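/- For all integers m ≥ 0 and k ≥ 0, the value at t = 1 of the normalized k-th derivative of the reciprocal Pochhammer symbol is Q_m^{(k)}(1) = (−1)^k · Ĥ_m^{(k)} / m!. -/

import Mathlib

open scoped BigOperators

/-- The reciprocal of the complex Gamma function, an entire function
(Mathlib's `Complex.Gamma` vanishes at nonpositive integers, so the inverse is `0` there). -/
noncomputable def Grec (t : ℂ) : ℂ := (Complex.Gamma t)⁻¹

/-- `G k t` is the `k`-th derivative of the reciprocal Gamma function at `t`. -/
noncomputable def G (k : ℕ) (t : ℂ) : ℂ := iteratedDeriv k Grec t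

/-- The Maclaurin coefficients of `1/Γ`: `c j = G^{(j)}(0)/j!`. -/
noncomputable def mcCoeff (j : ℕ) : ℂ := iteratedDeriv j Grec 0 / (j.factorial : ℂ)

/-- Bessel function of the first kind `J_ν(z)` for real `z > 0` and complex order `ν`,
with `(z/2)^ν = exp (ν log (z/2))`. -/
noncomputable def besselJ (z : ℝ) (ν : ℂ) : ℂ :=
  Complex.exp (ν * Complex.log ((z : ℂ) / 2)) *
    ∑' m : ℕ, (-(z : ℂ) ^ 2 / 4) ^ m / ((m.factorial : ℂ) * Complex.Gamma (ν + 1 + m))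

/-- Pochhammer symbol `(t)_m = t (t+1) ⋯ (t+m-1)`. -/
noncomputable def poch (t : ℂ) (m : ℕ) : ℂ := ∏ i ∈ Finset.range m, (t + i)

/-- `P m k t = (1/k!) dᵏ/dtᵏ (t)_m`. -/
noncomputable def P (m k : ℕ) (t : ℂ) : ℂ :=
  ((k.factorial : ℂ))⁻¹ * iteratedDeriv k (fun s => poch s m) t

/-- `Q m k t = (1/k!) dᵏ/dtᵏ (1/(t)_m)`. -/
noncomputable def Q (m k : ℕ) (t : ℂ) : ℂ :=
  ((k.factorial : ℂ))⁻¹ * iteratedDeriv k (fun s => (poch s m)⁻¹) t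

/-- Signed Stirling numbers of the first kind: `s(n,k)` is the coefficient of `x^k`
in `x(x-1)⋯(x-n+1)`. -/
noncomputable def stirS (n k : ℕ) : ℤ := (descPochhammer ℤ n).coeff k

/-- Modified generalized harmonic numbers `Ĥ_m^{(k)}`. -/
noncomputable def Hhat (m k : ℕ) : ℝ :=
  if m = 0 then (if k = 0 then 1 else 0)
  else ∑ j ∈ Finset.Icc 1 m, (-1 : ℝ) ^ (j - 1) * (m.choose j) / (j : ℝ) ^ k

/-- Digamma function `ψ = Γ'/Γ`. -/
noncomputable def digamma (t : ℂ) : ℂ := deriv Complex.Gamma t / Complex.Gamma t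



/-- partial fraction coefficients -/
noncomputable def pfc (m j : ℕ) : ℂ :=
  (-1)^j / ((j.factorial : ℂ) * ((m - 1 - j).factorial : ℂ))

lemma factC_ne (n : ℕ) : (n.factorial : ℂ) ≠ 0 :=
  Nat.cast_ne_zero.2 (Nat.factorial_ne_zero n)

lemma pfc_choose {m j : ℕ} (hj : j < m) :
    pfc m j = (-1)^j * (m.choose j : ℂ) * ((m:ℂ) - j) / (m.factorial : ℂ) := by
  have h := Nat.choose_mul_factorial_mul_factorial hj.le
  have hc : ((m.choose j : ℂ)) * (j.factorial : ℂ) * ((m - j).factorial : ℂ)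
      = (m.factorial : ℂ) := by exact_mod_cast congrArg (Nat.cast : ℕ → ℂ) h
  have hmj : m - j = (m - 1 - j) + 1 := by omega
  have hfact : ((m - j).factorial : ℂ) = ((m:ℂ) - j) * ((m - 1 - j).factorial : ℂ) := by
    rw [hmj, Nat.factorial_succ]
    push_cast
    have : ((m - 1 - j : ℕ) : ℂ) = (m:ℂ) - 1 - j := by
      have : ((m - 1 - j : ℕ) : ℂ) = ((m - 1 : ℕ) : ℂ) - j := by
        rw [Nat.cast_sub (by omega)]
      rw [this, Nat.cast_sub (by omega)]; push_cast; ring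
    rw [this]; ring
  have hne1 : ((m:ℂ) - j) ≠ 0 := by
    have : (j:ℂ) ≠ (m:ℂ) := by exact_mod_cast hj.ne
    intro h0; apply this; linear_combination -h0
  rw [hfact] at hc
  have h1 : (j.factorial:ℂ) * ((m-1-j).factorial:ℂ) ≠ 0 :=
    mul_ne_zero (factC_ne _) (factC_ne _)
  rw [pfc, div_eq_div_iff h1 (factC_ne m)]
  linear_combination (-(-1 : ℂ)^j) * hc

lemma pfc_succ {m j : ℕ} (hj : j ≤ m) :
    pfc (m+1) j = (-1)^j * (m.choose j : ℂ) / (m.factorial : ℂ) := by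
  have h := Nat.choose_mul_factorial_mul_factorial hj
  have hc : ((m.choose j : ℂ)) * (j.factorial : ℂ) * ((m - j).factorial : ℂ)
      = (m.factorial : ℂ) := by exact_mod_cast congrArg (Nat.cast : ℕ → ℂ) h
  have h1 : (j.factorial:ℂ) * (((m+1) - 1 - j).factorial:ℂ) ≠ 0 :=
    mul_ne_zero (factC_ne _) (factC_ne _)
  rw [pfc, div_eq_div_iff h1 (factC_ne m)]
  have : (m + 1) - 1 - j = m - j := by omega
  rw [this]
  linear_combination (-(-1 : ℂ)^j) * hc

lemma pfc_eq {m j : ℕ} (hj : j < m) :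
    pfc m j = pfc (m+1) j * ((m:ℂ) - j) := by
  rw [pfc_choose hj, pfc_succ hj.le]; ring

lemma pf : ∀ m, 1 ≤ m → ∀ s : ℂ, (∀ j ∈ Finset.range m, s + (j:ℂ) ≠ 0) →
    (poch s m)⁻¹ = ∑ j ∈ Finset.range m, pfc m j * (s + j)⁻¹ := by
  intro m hm
  induction m, hm using Nat.le_induction with
  | base =>
    intro s _
    simp [poch, pfc]
  | succ m hm ih =>
    intro s hs
    have hsm : s + (m:ℂ) ≠ 0 := hs m (by simp)
    have hs' : ∀ j ∈ Finset.range m, s + (j:ℂ) ≠ 0 := fun j hj =>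
      hs j (Finset.mem_range.2 ((Finset.mem_range.1 hj).trans (Nat.lt_succ_self m)))
    have hpoch : poch s (m+1) = poch s m * (s + m) := Finset.prod_range_succ _ _
    rw [hpoch, mul_inv, ih s hs', Finset.sum_mul]
    have key : ∀ j ∈ Finset.range m,
        pfc m j * (s + j)⁻¹ * (s + m)⁻¹
          = pfc (m+1) j * (s + j)⁻¹ - pfc (m+1) j * (s + m)⁻¹ := by
      intro j hj
      have hjm := Finset.mem_range.1 hj
      have hsj : s + (j:ℂ) ≠ 0 := hs' j hj
      have hmj : ((m:ℂ) - j) ≠ 0 := by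
        have : (j:ℂ) ≠ (m:ℂ) := by exact_mod_cast hjm.ne
        intro h0; apply this; linear_combination -h0
      rw [pfc_eq hjm]
      field_simp
      ring
    rw [Finset.sum_congr rfl key, Finset.sum_sub_distrib, ← Finset.sum_mul,
      Finset.sum_range_succ]
    have hlast : ∑ j ∈ Finset.range m, pfc (m+1) j = -pfc (m+1) m := by
      have h0 : ∑ j ∈ Finset.range (m+1), ((-1:ℂ))^j * (m.choose j : ℂ) = 0 := by
        have := Int.alternating_sum_range_choose_of_ne (Nat.one_le_iff_ne_zero.1 hm)
        exact_mod_cast congrArg (Int.cast : ℤ → ℂ) this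
      have hsum : ∀ j ∈ Finset.range (m+1), pfc (m+1) j
          = ((-1:ℂ))^j * (m.choose j : ℂ) / (m.factorial : ℂ) := fun j hj =>
        pfc_succ (Nat.lt_succ_iff.1 (Finset.mem_range.1 hj))
      have h1 : ∑ j ∈ Finset.range (m+1), pfc (m+1) j = 0 := by
        rw [Finset.sum_congr rfl hsum, ← Finset.sum_div, h0, zero_div]
      rw [Finset.sum_range_succ] at h1
      linear_combination h1
    rw [hlast]
    ring

lemma iter_deriv_shift_inv (a : ℂ) (k : ℕ) :
    deriv^[k] (fun s : ℂ => (s + a)⁻¹) = fun x => deriv^[k] Inv.inv (x + a) := by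
  induction k with
  | zero => rfl
  | succ k ih =>
    funext x
    rw [Function.iterate_succ_apply', ih, deriv_comp_add_const]
    exact congrFun (Function.iterate_succ_apply' deriv k Inv.inv).symm (x+a)

lemma prod_neg_one_sub (k : ℕ) :
    (∏ i ∈ Finset.range k, (-1 - (i:ℂ))) = (-1)^k * (k.factorial : ℂ) := by
  induction k with
  | zero => simp
  | succ k ih =>
    rw [Finset.prod_range_succ, ih, Nat.factorial_succ]
    push_cast; ring

/-- closed form for the k-th derivative of the partial fraction sum -/
noncomputable def Sk (m k : ℕ) (s : ℂ) : ℂ :=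
  ∑ j ∈ Finset.range m, pfc m j *
    ((∏ i ∈ Finset.range k, (-1 - (i:ℂ))) * (s + j) ^ (-1 - (k:ℤ)))

lemma Sk_hasDerivAt (m k : ℕ) (s : ℂ) (hs : ∀ j ∈ Finset.range m, s + (j:ℂ) ≠ 0) :
    HasDerivAt (Sk m k) (Sk m (k+1) s) s := by
  unfold Sk
  apply HasDerivAt.fun_sum
  intro j hj
  have hsj := hs j hj
  have h4 := ((hasDerivAt_zpow (-1 - (k:ℤ)) (s + (j:ℂ)) (Or.inl hsj)).comp s
      ((hasDerivAt_id s).add_const ((j:ℕ):ℂ))).const_mul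
      (pfc m j * ∏ i ∈ Finset.range k, (-1 - (i:ℂ)))
  convert h4 using 1
  · rfl
  · funext y; simp [Function.comp]; ring
  · rw [Finset.prod_range_succ]
    have hk : (-1 - ((k:ℕ)+1:ℕ) : ℤ) = -1 - (k:ℤ) - 1 := by push_cast; ring
    rw [hk]
    push_cast
    ring

lemma eventually_ne_one (m : ℕ) : ∀ᶠ s in nhds (1:ℂ), ∀ j ∈ Finset.range m, s + (j:ℂ) ≠ 0 := by
  rw [Filter.eventually_all_finset]
  intro j _
  have h1 : (1:ℂ) + (j:ℂ) ≠ 0 := by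
    have : ((1 + j : ℕ) : ℂ) ≠ 0 := Nat.cast_ne_zero.2 (by omega)
    push_cast at this; exact this
  exact ((continuous_id.add continuous_const).tendsto 1).eventually_ne h1

lemma evderiv (m : ℕ) (hm : 1 ≤ m) (k : ℕ) :
    deriv^[k] (fun s : ℂ => (poch s m)⁻¹) =ᶠ[nhds (1:ℂ)] Sk m k := by
  induction k with
  | zero =>
    refine (eventually_ne_one m).mono fun s hs => ?_
    simp only [Function.iterate_zero_apply]
    rw [pf m hm s hs, Sk]
    simp
  | succ k ih =>
    have hfun : deriv^[k+1] (fun s : ℂ => (poch s m)⁻¹)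
        = deriv (deriv^[k] (fun s : ℂ => (poch s m)⁻¹)) :=
      congrFun (Function.iterate_succ' deriv k) _
    rw [hfun]
    refine ih.deriv.trans ?_
    exact (eventually_ne_one m).mono fun s hs => (Sk_hasDerivAt m k s hs).deriv

lemma main_val (m : ℕ) (hm : 1 ≤ m) (k : ℕ) :
    iteratedDeriv k (fun s : ℂ => (poch s m)⁻¹) 1
      = ∑ j ∈ Finset.range m,
          pfc m j * ((-1)^k * (k.factorial:ℂ) * ((1:ℂ) + j) ^ (-1 - (k:ℤ))) := by
  rw [iteratedDeriv_eq_iterate, (evderiv m hm k).eq_of_nhds, Sk, prod_neg_one_sub]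

lemma pfc_end {m j : ℕ} (hj : j < m) :
    pfc m j = (-1)^j * ((j:ℂ)+1) * (m.choose (j+1) : ℂ) / (m.factorial : ℂ) := by
  obtain ⟨n, rfl⟩ : ∃ n, m = n + 1 := ⟨m - 1, by omega⟩
  rw [pfc_succ (Nat.lt_succ_iff.1 hj)]
  have h := Nat.add_one_mul_choose_eq n j
  have hc : ((n:ℂ)+1) * (n.choose j : ℂ) = ((n+1).choose (j+1) : ℂ) * ((j:ℂ)+1) := by
    exact_mod_cast congrArg (Nat.cast : ℕ → ℂ) h
  rw [Nat.factorial_succ]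
  have h1 := factC_ne n
  have h2 : ((n:ℂ)+1) ≠ 0 := by
    have : ((n+1:ℕ):ℂ) ≠ 0 := Nat.cast_ne_zero.2 (by omega)
    push_cast at this; exact this
  push_cast
  field_simp
  linear_combination hc

/-- `Q_m^{(k)}(1) = (−1)ᵏ Ĥ_m^{(k)} / m!`. -/
theorem Q_at_one (m k : ℕ) :
    Q m k 1 = (-1) ^ k * ((Hhat m k : ℝ) : ℂ) / (m.factorial : ℂ) := by
  rcases Nat.eq_zero_or_pos m with rfl | hm
  · have hp : (fun s : ℂ => (poch s 0)⁻¹) = fun _ => (1:ℂ) := by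
      funext s; simp [poch]
    rw [Q, hp]
    rcases Nat.eq_zero_or_pos k with rfl | hk
    · simp [Hhat]
    · obtain ⟨k', rfl⟩ : ∃ k', k = k' + 1 := ⟨k - 1, by omega⟩
      have hzero : ∀ n, deriv^[n] (fun _ : ℂ => (0:ℂ)) = fun _ => (0:ℂ) := by
        intro n
        induction n with
        | zero => rfl
        | succ n ih => rw [Function.iterate_succ_apply, show deriv (fun _ : ℂ => (0:ℂ)) = fun _ => (0:ℂ) from funext fun x => deriv_const x 0, ih]
      rw [iteratedDeriv_eq_iterate, Function.iterate_succ_apply,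
        show deriv (fun _ : ℂ => (1:ℂ)) = fun _ => (0:ℂ) from funext fun x => deriv_const x 1,
        hzero k']
      simp [Hhat]
  · have hH : ((Hhat m k : ℝ) : ℂ)
        = ∑ j ∈ Finset.range m, (-1:ℂ)^j * (m.choose (j+1) : ℂ) / ((j:ℂ)+1)^k := by
      rw [Hhat, if_neg (by omega)]
      have himg : Finset.Icc 1 m = Finset.image (· + 1) (Finset.range m) := by
        ext x
        simp only [Finset.mem_Icc, Finset.mem_image, Finset.mem_range]
        constructor
        · rintro ⟨h1, h2⟩; exact ⟨x - 1, by omega, by omega⟩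
        · rintro ⟨a, ha, rfl⟩; omega
      rw [himg, Finset.sum_image (by intros a _ b _ h; simp only at h; omega)]
      push_cast
      refine Finset.sum_congr rfl fun j _ => ?_
      norm_num
    rw [Q, main_val m hm k, hH, Finset.mul_sum, Finset.mul_sum, Finset.sum_div]
    refine Finset.sum_congr rfl fun j hj => ?_
    have hjm := Finset.mem_range.1 hj
    have hj1 : ((1:ℂ) + j) ≠ 0 := by
      have : ((1 + j : ℕ) : ℂ) ≠ 0 := Nat.cast_ne_zero.2 (by omega)
      push_cast at this; exact this
    have hzp : ((1:ℂ) + j) ^ (-1 - (k:ℤ)) = (((1:ℂ) + j) ^ (k+1))⁻¹ := by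
      rw [show (-1 - (k:ℤ)) = -((k+1:ℕ):ℤ) by push_cast; ring, zpow_neg, zpow_natCast]
    have hj1' : ((j:ℂ) + 1) ≠ 0 := by rw [add_comm] at hj1; exact hj1
    have hk2 : (((j:ℂ) + 1) ^ k) ≠ 0 := pow_ne_zero _ hj1'
    rw [pfc_end hjm, hzp, pow_succ, add_comm (1:ℂ) ((j:ℂ))]
    field_simp [factC_ne]
    rw [mul_div_mul_left _ _ (factC_ne k)]
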